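/- Let q be a quadratic form of signature (1,n) on a real vector space V, and let x, y be two vectors with q(x) > 0 and q(y) > 0. Then x and y lie in the same connected component of the positive cone if and only if the associated bilinear form satisfies b(x,y) > 0. -/

import Mathlib

/-- two positive vectors for a form of signature (1,n) lie in the same
connected component of the positive cone iff b(x,y) > 0. -/
theorem same_component_iff_positive_pairing (n : ℕ)
    (V : Type*) [NormedAddCommGroup V] [NormedSpace ℝ V]
    (b : V → V → ℝ) (e : V ≃ₗ[ℝ] (Fin (n+1) → ℝ))
    (hb : ∀ v w, b v w = (e v 0) * (e w 0) - ∑ i : Fin n, (e v i.succ) * (e w i.succ))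
    (x y : V) (hx : 0 < b x x) (hy : 0 < b y y) :
    connectedComponentIn {v | 0 < b v v} x = connectedComponentIn {v | 0 < b v v} y
      ↔ 0 < b x y := by
  classical
  have : FiniteDimensional ℝ V := LinearEquiv.finiteDimensional e.symm
  set S : Set V := {v | 0 < b v v} with hS
  set f : V → ℝ := fun v => e v 0 with hf
  set p : V → EuclideanSpace ℝ (Fin n) := fun v => WithLp.toLp 2 (fun i : Fin n => e v i.succ) with hp
  have hinner : ∀ v w, (inner ℝ (p v) (p w) : ℝ) = ∑ i : Fin n, (e v i.succ) * (e w i.succ) := by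
    intro v w
    simp [hp, PiLp.inner_apply, RCLike.inner_apply, mul_comm]
  have hbvw : ∀ v w, b v w = f v * f w - inner ℝ (p v) (p w) := by
    intro v w; rw [hb, hinner]
  have hmem : ∀ v, v ∈ S ↔ ‖p v‖ < |f v| := by
    intro v
    have h1 : ‖p v‖ ^ 2 = inner ℝ (p v) (p v) := by
      rw [real_inner_self_eq_norm_sq]
    constructor
    · intro hv
      have hv' : 0 < b v v := hv
      have h2 : ‖p v‖ ^ 2 < |f v| ^ 2 := by
        have := hbvw v v
        rw [h1]
        nlinarith [sq_abs (f v)]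
      exact lt_of_pow_lt_pow_left₀ 2 (abs_nonneg _) h2
    · intro hv
      have h2 : ‖p v‖ ^ 2 < |f v| ^ 2 :=
        pow_lt_pow_left₀ hv (norm_nonneg _) (by norm_num)
      have : (inner ℝ (p v) (p v) : ℝ) < f v * f v := by
        rw [← h1]; nlinarith [sq_abs (f v)]
      have := hbvw v v
      simp only [hS, Set.mem_setOf_eq]
      linarith
  have hpair : ∀ v w, v ∈ S → w ∈ S → (0 < b v w ↔ 0 < f v * f w) := by
    intro v w hv hw
    rw [hmem] at hv hw
    have hcs : |(inner ℝ (p v) (p w) : ℝ)| ≤ ‖p v‖ * ‖p w‖ := abs_real_inner_le_norm _ _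
    have hlt : ‖p v‖ * ‖p w‖ < |f v| * |f w| :=
      mul_lt_mul'' hv hw (norm_nonneg _) (norm_nonneg _)
    have habs : |(inner ℝ (p v) (p w) : ℝ)| < |f v * f w| := by
      rw [abs_mul]; linarith
    have hfv : f v ≠ 0 := by
      intro h; rw [h, abs_zero] at hv; exact absurd hv (not_lt.2 (norm_nonneg _))
    have hfw : f w ≠ 0 := by
      intro h; rw [h, abs_zero] at hw; exact absurd hw (not_lt.2 (norm_nonneg _))
    have hbw := hbvw v w
    constructor
    · intro h
      rcases lt_or_gt_of_ne (mul_ne_zero hfv hfw) with hneg | hpos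
      · exfalso
        have : |f v * f w| = -(f v * f w) := abs_of_neg hneg
        rw [this] at habs
        have := abs_lt.mp habs
        nlinarith
      · exact hpos
    · intro h
      have : |f v * f w| = f v * f w := abs_of_pos h
      rw [this] at habs
      have := abs_lt.mp habs
      nlinarith
  constructor
  · -- same component → positive pairing
    intro hcomp
    have hyx : y ∈ connectedComponentIn S x := by
      rw [hcomp]; exact mem_connectedComponentIn hy
    have hxx : x ∈ connectedComponentIn S x := mem_connectedComponentIn hx
    have hconn : IsPreconnected (connectedComponentIn S x) :=
      (isPreconnected_connectedComponentIn)
    have hsub : connectedComponentIn S x ⊆ S := connectedComponentIn_subset _ _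
    have hfc : ContinuousOn f (connectedComponentIn S x) := by
      have : Continuous f := by
        have h1 : Continuous fun v : V => e v := e.toLinearMap.continuous_of_finiteDimensional
        exact (continuous_apply (0 : Fin (n+1))).comp h1
      exact this.continuousOn
    have hne : ∀ z ∈ connectedComponentIn S x, f z ≠ 0 := by
      intro z hz h0
      have := (hmem z).mp (hsub hz)
      rw [h0, abs_zero] at this
      exact absurd this (not_lt.2 (norm_nonneg _))
    rw [hpair x y hx hy]
    rcases lt_trichotomy (f x * f y) 0 with hneg | hzero | hpos
    · exfalso
      rcases lt_or_gt_of_ne (hne x hxx) with hx0 | hx0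
      · have hy0 : 0 < f y := by nlinarith
        have : Set.Icc (f x) (f y) ⊆ f '' connectedComponentIn S x :=
          IsPreconnected.intermediate_value hconn hxx hyx hfc
        obtain ⟨z, hz, hz0⟩ := this ⟨hx0.le, hy0.le⟩
        exact hne z hz hz0
      · have hy0 : f y < 0 := by nlinarith
        have : Set.Icc (f y) (f x) ⊆ f '' connectedComponentIn S x :=
          IsPreconnected.intermediate_value hconn hyx hxx hfc
        obtain ⟨z, hz, hz0⟩ := this ⟨hy0.le, hx0.le⟩
        exact hne z hz hz0
    · exact absurd hzero (mul_ne_zero (hne x hxx) (hne y hyx))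
    · exact hpos
  · -- positive pairing → same component
    intro hbxy
    have hfxy : 0 < f x * f y := (hpair x y hx hy).mp hbxy
    -- the segment from x to y stays in S
    have hseg : segment ℝ x y ⊆ S := by
      rintro v ⟨a, c, ha, hc, hac, rfl⟩
      rw [hmem]
      have hpv : p (a • x + c • y) = a • p x + c • p y := by
        ext i
        simp [hp, map_add, map_smul]
      have hfv : f (a • x + c • y) = a * f x + c * f y := by
        simp [hf, map_add, map_smul]
      have hxm := (hmem x).mp hx
      have hym := (hmem y).mp hy
      have hnorm : ‖p (a • x + c • y)‖ ≤ a * ‖p x‖ + c * ‖p y‖ := by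
        rw [hpv]
        calc ‖a • p x + c • p y‖ ≤ ‖a • p x‖ + ‖c • p y‖ := norm_add_le _ _
        _ = a * ‖p x‖ + c * ‖p y‖ := by
            rw [norm_smul, norm_smul, Real.norm_eq_abs, Real.norm_eq_abs,
              abs_of_nonneg ha, abs_of_nonneg hc]
      have hstrict : a * ‖p x‖ + c * ‖p y‖ < a * |f x| + c * |f y| := by
        rcases eq_or_lt_of_le ha with ha0 | ha0
        · have hc1 : c = 1 := by linarith
          rw [← ha0, hc1]; simpa using hym
        · have h1 : a * ‖p x‖ < a * |f x| := by exact (mul_lt_mul_iff_right₀ ha0).mpr hxm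
          have h2 : c * ‖p y‖ ≤ c * |f y| := mul_le_mul_of_nonneg_left hym.le hc
          linarith
      have habsf : a * |f x| + c * |f y| = |f (a • x + c • y)| := by
        rw [hfv]
        rcases lt_trichotomy (f x) 0 with hx0 | hx0 | hx0
        · have hy0 : f y < 0 := by nlinarith
          rw [abs_of_neg hx0, abs_of_neg hy0, abs_of_nonpos]
          · ring
          · nlinarith
        · exfalso; rw [hx0] at hfxy; simp at hfxy
        · have hy0 : 0 < f y := by nlinarith
          rw [abs_of_pos hx0, abs_of_pos hy0, abs_of_nonneg]
          nlinarith
      linarith [lt_of_le_of_lt hnorm hstrict, habsf.le, habsf.ge]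
    have hsegconn : IsPreconnected (segment ℝ x y) := (convex_segment x y).isPreconnected
    have hxseg : x ∈ segment ℝ x y := left_mem_segment ℝ x y
    have hyseg : y ∈ segment ℝ x y := right_mem_segment ℝ x y
    have hsub : segment ℝ x y ⊆ connectedComponentIn S x :=
      hsegconn.subset_connectedComponentIn hxseg hseg
    exact (connectedComponentIn_eq (hsub hyseg)).symm ▸ rfl
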